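/- Let p be a prime, q a power of p, and k, t positive integers. Let q' = p^r for a non-negative integer r, set p_i = 1 + q' + q'^2 + … + q'^i for i ≥ 0, and let n = t·p_k. Let s be a positive integer coprime with n and σ : x ↦ x^{q^s} on F_{q^n}, and let f(x) = x + Σ_{i=0}^{k−1} x^{σ^{t p_i}}. Then the set Q = { β^{−σ^{t p_{k−1}}} f(βx) : β ∈ F_{q^n}^* } is a family of σ-subspace polynomials of L_{n,σ} of σ-degree t·p_{k−1} (each element has exactly q^{t p_{k−1}} roots in F_{q^n}, forming an F_q-subspace); moreover, for α, β ∈ F_{q^n}^*, α^{−σ^{t p_{k−1}}} f(αx) = β^{−σ^{t p_{k−1}}} f(βx) if and only if α/β ∈ F_{q^t}, and consequently |Q| = (q^n−1)/(q^t−1). -/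

import Mathlib

section Helpers

variable {K : Type} [Field K] [Fintype K]


variable {K : Type} [Field K] [Fintype K]

/-- Counting helper: if `L` maps `A` into `B` and differences of points of `A` with equal
`L`-value lie in `C`, then `|A| ≤ |B|·|C|`. -/
lemma countCH (A B C : Set K) (L : K → K) (hL : ∀ x ∈ A, L x ∈ B)
    (hd : ∀ x ∈ A, ∀ y ∈ A, L x = L y → x - y ∈ C) :
    Nat.card A ≤ Nat.card B * Nat.card C := by
  classical
  rw [← Nat.card_prod]
  have key : ∀ x : K, x ∈ A → ∃ a, a ∈ A ∧ L a = L x := fun x hx => ⟨x, hx, rfl⟩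
  let r : K → K := fun x => if h : ∃ a, a ∈ A ∧ L a = L x then h.choose else 0
  have hr : ∀ x : K, x ∈ A → r x ∈ A ∧ L (r x) = L x := by
    intro x hx
    have h : ∃ a, a ∈ A ∧ L a = L x := key x hx
    simp only [r, dif_pos h]
    exact ⟨h.choose_spec.1, h.choose_spec.2⟩
  have hrL : ∀ x y : K, x ∈ A → y ∈ A → L x = L y → r x = r y := by
    intro x y hx hy hxy
    simp only [r, hxy]
  have hmem : ∀ x : ↥A, (x : K) - r x ∈ C := by
    rintro ⟨x, hx⟩
    exact hd x hx _ (hr x hx).1 (hr x hx).2.symm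
  apply Nat.card_le_card_of_injective
    (fun x : ↥A => ((⟨L x, hL x x.2⟩ : ↥B), (⟨(x : K) - r x, hmem x⟩ : ↥C)))
  rintro ⟨x, hx⟩ ⟨y, hy⟩ h
  simp only [Prod.mk.injEq, Subtype.mk.injEq] at h
  obtain ⟨h1, h2⟩ := h
  have : r x = r y := hrL x y hx hy h1
  rw [this] at h2
  exact Subtype.ext (by have := sub_left_injective h2; exact this)

/-- Kernel bound for σ-linearized polynomials: a nonzero `Q`-linearized polynomial of
`Q`-degree `d` has at most `qf^d` roots, where `qf` bounds the fixed points of `x ↦ x^Q`. -/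
lemma UB (Q qf : ℕ) (hQ : 0 < Q)
    (hadd : ∀ x y : K, (x + y) ^ Q = x ^ Q + y ^ Q)
    (hfix : Nat.card {x : K | x ^ Q = x} ≤ qf) :
    ∀ (d : ℕ) (a : ℕ → K), a d ≠ 0 →
      Nat.card {x : K | ∑ i ∈ Finset.range (d + 1), a i * x ^ Q ^ i = 0} ≤ qf ^ d := by
  classical
  have hsub : ∀ x y : K, (x - y) ^ Q = x ^ Q - y ^ Q := by
    intro x y
    have := hadd (x - y) y
    rw [sub_add_cancel] at this
    exact eq_sub_of_add_eq this.symm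
  have hsubpow : ∀ (i : ℕ) (x y : K), (x - y) ^ Q ^ i = x ^ Q ^ i - y ^ Q ^ i := by
    intro i
    induction i with
    | zero => simp
    | succ i ih =>
      intro x y
      rw [pow_succ, pow_mul, pow_mul, pow_mul, ih, hsub]
  have hqf1 : 1 ≤ qf := by
    refine le_trans ?_ hfix
    rw [Nat.card_coe_set_eq]
    have hne : ({x : K | x ^ Q = x}).Nonempty := ⟨1, by simp⟩
    exact hne.ncard_pos (Set.toFinite _)
  intro d
  induction d with
  | zero =>
    intro a ha
    have : {x : K | ∑ i ∈ Finset.range 1, a i * x ^ Q ^ i = 0} = {(0 : K)} := by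
      ext x
      simp only [Finset.sum_range_one, pow_zero, pow_one, Set.mem_setOf_eq,
        Set.mem_singleton_iff, mul_eq_zero]
      constructor
      · rintro (h | h)
        · exact absurd h ha
        · exact h
      · intro h; right; exact h
    rw [this, Nat.card_coe_set_eq, Set.ncard_singleton]
    simp
  | succ e ih =>
    intro a ha
    by_cases hz : ∀ x : K, (∑ i ∈ Finset.range (e + 1 + 1), a i * x ^ Q ^ i = 0) → x = 0
    · calc Nat.card {x : K | ∑ i ∈ Finset.range (e + 1 + 1), a i * x ^ Q ^ i = 0}
          ≤ Nat.card ({0} : Set K) := by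
            rw [Nat.card_coe_set_eq, Nat.card_coe_set_eq]
            exact Set.ncard_le_ncard (fun x hx => hz x hx) (Set.finite_singleton 0)
        _ ≤ qf ^ (e + 1) := by
            rw [Nat.card_coe_set_eq, Set.ncard_singleton]
            exact Nat.one_le_pow _ _ hqf1
    · push_neg at hz
      obtain ⟨v, hv0, hvne⟩ := hz
      set c : K := v ^ Q / v with hc
      have hvQ : v ^ Q = c * v := by
        rw [hc, div_mul_cancel₀ _ hvne]
      have hcne : c ≠ 0 := by
        intro h
        rw [h, zero_mul] at hvQ
        exact hvne (pow_eq_zero_iff hQ.ne' |>.mp hvQ)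
      set b : ℕ → K := fun i =>
        ∑ j ∈ Finset.Ioc i (e + 1), a j * ∏ l ∈ Finset.Ioc i (j - 1), c ^ Q ^ l with hb
      have hbtop : b e = a (e + 1) := by
        simp [hb, Nat.Ioc_succ_singleton]
      have hbrec : ∀ i, i ≤ e → b i = a (i + 1) + c ^ Q ^ (i + 1) * b (i + 1) := by
        intro i hi
        simp only [hb]
        have h1 : Finset.Ioc i (e + 1) = insert (i + 1) (Finset.Ioc (i + 1) (e + 1)) := by
          rw [Finset.Ioc_insert_left (by omega), Finset.Icc_add_one_left_eq_Ioc]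
        rw [h1, Finset.sum_insert (by simp)]
        have h2 : a (i + 1) * ∏ l ∈ Finset.Ioc i (i + 1 - 1), c ^ Q ^ l = a (i + 1) := by
          simp
        rw [h2]
        congr 1
        rw [Finset.mul_sum]
        apply Finset.sum_congr rfl
        intro j hj
        simp only [Finset.mem_Ioc] at hj
        have h3 : Finset.Ioc i (j - 1) = insert (i + 1) (Finset.Ioc (i + 1) (j - 1)) := by
          rw [Finset.Ioc_insert_left (by omega), Finset.Icc_add_one_left_eq_Ioc]
        rw [h3, Finset.prod_insert (by simp)]
        ring
      have hbe1 : b (e + 1) = 0 := by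
        simp [hb]
      set L : K → K := fun x => x ^ Q - c * x with hLdef
      set g : K → K := fun x => ∑ i ∈ Finset.range (e + 1), b i * x ^ Q ^ i with hg
      -- main identity
      have hgL : ∀ x : K, ∑ i ∈ Finset.range (e + 1 + 1), a i * x ^ Q ^ i
          = g (L x) + (a 0 + b 0 * c) * x := by
        intro x
        have hexp : ∀ i : ℕ, (L x) ^ Q ^ i = x ^ Q ^ (i + 1) - c ^ Q ^ i * x ^ Q ^ i := by
          intro i
          simp only [hLdef]
          rw [hsubpow, mul_pow, ← pow_mul, ← pow_succ']
        have hgx : g (L x) = (∑ i ∈ Finset.range (e + 1), b i * x ^ Q ^ (i + 1))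
            - ∑ i ∈ Finset.range (e + 1), b i * c ^ Q ^ i * x ^ Q ^ i := by
          simp only [hg]
          rw [← Finset.sum_sub_distrib]
          apply Finset.sum_congr rfl
          intro i _
          rw [hexp i]
          ring
        rw [hgx]
        rw [Finset.sum_range_succ' (fun i => a i * x ^ Q ^ i) (e + 1)]
        have ha0 : a 0 * x ^ Q ^ 0 = a 0 * x := by simp
        rw [ha0]
        have hsubst : ∑ i ∈ Finset.range (e + 1), a (i + 1) * x ^ Q ^ (i + 1)
            = ∑ i ∈ Finset.range (e + 1), (b i - c ^ Q ^ (i + 1) * b (i + 1)) * x ^ Q ^ (i + 1) := by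
          apply Finset.sum_congr rfl
          intro i hi
          simp only [Finset.mem_range] at hi
          have := hbrec i (by omega)
          have : a (i + 1) = b i - c ^ Q ^ (i + 1) * b (i + 1) := by
            rw [this]; ring
          rw [this]
        rw [hsubst]
        have hright : ∑ i ∈ Finset.range (e + 1), b i * c ^ Q ^ i * x ^ Q ^ i
            = (∑ i ∈ Finset.range e, b (i + 1) * c ^ Q ^ (i + 1) * x ^ Q ^ (i + 1)) + b 0 * c * x := by
          rw [Finset.sum_range_succ' (fun i => b i * c ^ Q ^ i * x ^ Q ^ i) e]
          simp
        have hleft : ∑ i ∈ Finset.range (e + 1), (b i - c ^ Q ^ (i + 1) * b (i + 1)) * x ^ Q ^ (i + 1)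
            = (∑ i ∈ Finset.range (e + 1), b i * x ^ Q ^ (i + 1))
              - ∑ i ∈ Finset.range e, b (i + 1) * c ^ Q ^ (i + 1) * x ^ Q ^ (i + 1) := by
          have key : ∑ i ∈ Finset.range (e + 1), (b i - c ^ Q ^ (i + 1) * b (i + 1)) * x ^ Q ^ (i + 1)
              = ∑ i ∈ Finset.range (e + 1),
                  (b i * x ^ Q ^ (i + 1) - b (i + 1) * c ^ Q ^ (i + 1) * x ^ Q ^ (i + 1)) := by
            apply Finset.sum_congr rfl
            intro i _
            ring
          rw [key, Finset.sum_sub_distrib]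
          congr 1
          rw [Finset.sum_range_succ, hbe1]
          ring
        rw [hleft, hright]
        ring
      have hLv : L v = 0 := by
        simp only [hLdef]
        rw [hvQ]
        ring
      have hg0 : g 0 = 0 := by
        simp only [hg]
        apply Finset.sum_eq_zero
        intro i _
        rw [zero_pow (pow_ne_zero i hQ.ne')]
        ring
      have hrho : a 0 + b 0 * c = 0 := by
        have := hgL v
        rw [hv0, hLv, hg0] at this
        have h0 : (a 0 + b 0 * c) * v = 0 := by linear_combination -this
        rcases mul_eq_zero.mp h0 with h | h
        · exact h
        · exact absurd h hvne
      -- counting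
      have hcount := countCH {x : K | ∑ i ∈ Finset.range (e + 1 + 1), a i * x ^ Q ^ i = 0}
        {x : K | ∑ i ∈ Finset.range (e + 1), b i * x ^ Q ^ i = 0}
        {x : K | L x = 0} L
        (by
          intro x hx
          simp only [Set.mem_setOf_eq] at hx ⊢
          have := hgL x
          rw [hx, hrho, zero_mul, add_zero] at this
          simp only [hg] at this
          exact this.symm)
        (by
          intro x hx y hy hxy
          simp only [Set.mem_setOf_eq]
          simp only [hLdef] at hxy ⊢
          rw [hsub, show x ^ Q - y ^ Q - c * (x - y) = (x ^ Q - c * x) - (y ^ Q - c * y) from by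
            ring, hxy, sub_self])
      have hker : Nat.card {x : K | L x = 0} ≤ qf := by
        refine le_trans ?_ hfix
        apply Nat.card_le_card_of_injective
          (fun x : ↥{x : K | L x = 0} => (⟨(x : K) / v, by
            obtain ⟨x, hx⟩ := x
            simp only [Set.mem_setOf_eq] at hx ⊢
            have hxQ : x ^ Q = c * x := by
              simp only [hLdef] at hx
              linear_combination hx
            rw [div_pow, hxQ, hvQ, mul_div_mul_left _ _ hcne]⟩ : ↥{x : K | x ^ Q = x}))
        rintro ⟨x, hx⟩ ⟨y, hy⟩ h
        simp only [Subtype.mk.injEq] at h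
        have := congrArg (· * v) h
        simp only [div_mul_cancel₀ _ hvne] at this
        exact Subtype.ext this
      calc Nat.card {x : K | ∑ i ∈ Finset.range (e + 1 + 1), a i * x ^ Q ^ i = 0}
          ≤ Nat.card {x : K | ∑ i ∈ Finset.range (e + 1), b i * x ^ Q ^ i = 0}
            * Nat.card {x : K | L x = 0} := hcount
        _ ≤ qf ^ e * qf := by
            apply Nat.mul_le_mul
            · exact ih b (by rw [hbtop]; exact ha)
            · exact hker
        _ = qf ^ (e + 1) := by rw [pow_succ]

end Helpers

/-- `F_q`-dimension of the kernel (set of roots in `K`) of a map `f : K → K`. -/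
noncomputable def kdim (Fq : Type) [Field Fq] {K : Type} [Field K] [Algebra Fq K]
    (f : K → K) : ℕ :=
  Module.finrank Fq ↥(Submodule.span Fq {x : K | f x = 0})

/-- with `q' = p^r`, `p_i = 1 + q' + ⋯ + q'^i`, `n = t·p_k`, `gcd(s,n)=1`,
`σ : x ↦ x^{q^s}` and `f(x) = x + Σ_{i=0}^{k−1} x^{σ^{t·p_i}}`, the set
`Q = { β^{−σ^{t·p_{k−1}}} f(βx) : β ≠ 0 }` consists of σ-subspace polynomials of σ-degree
`t·p_{k−1}` (each has exactly `q^{t·p_{k−1}}` roots in `F_{q^n}`); two parameters `α, β`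
give the same polynomial iff `α/β ∈ F_{q^t}`, and `|Q| = (q^n−1)/(q^t−1)`. -/
theorem stmt_8 (p q qp r s t k n : ℕ) (Fq K : Type) [Field Fq] [Fintype Fq] [Field K]
    [Fintype K] [Algebra Fq K]
    (hp : p.Prime) (hpe : ∃ e : ℕ, 0 < e ∧ q = p ^ e) (hqp : qp = p ^ r)
    (ht : 0 < t) (hk : 0 < k)
    (hn : n = t * ∑ j ∈ Finset.range (k + 1), qp ^ j)
    (hs : 0 < s) (hsn : Nat.gcd s n = 1)
    (hcard : Fintype.card Fq = q) (hfin : Module.finrank Fq K = n)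
    (D : ℕ) (hD : D = t * ∑ j ∈ Finset.range k, qp ^ j)
    (f : K → K)
    (hf : f = fun x : K =>
      x + ∑ i ∈ Finset.range k, x ^ ((q ^ s) ^ (t * ∑ j ∈ Finset.range (i + 1), qp ^ j))) :
    (∀ β : K, β ≠ 0 →
      kdim Fq (fun x : K => (β ^ ((q ^ s) ^ D))⁻¹ * f (β * x)) = D ∧
      Nat.card ↥{x : K | (β ^ ((q ^ s) ^ D))⁻¹ * f (β * x) = 0} = q ^ D) ∧
    (∀ α β : K, α ≠ 0 → β ≠ 0 →
      ((fun x : K => (α ^ ((q ^ s) ^ D))⁻¹ * f (α * x))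
          = (fun x : K => (β ^ ((q ^ s) ^ D))⁻¹ * f (β * x))
        ↔ (α * β⁻¹) ^ q ^ t = α * β⁻¹)) ∧
    Nat.card ↥{g : K → K | ∃ β : K, β ≠ 0 ∧
        g = fun x : K => (β ^ ((q ^ s) ^ D))⁻¹ * f (β * x)}
      = (q ^ n - 1) / (q ^ t - 1) := by
  classical
  obtain ⟨e, he, hqe⟩ := hpe
  haveI hfp : Fact p.Prime := ⟨hp⟩
  haveI hcharFq : CharP Fq p := by
    haveI := ringChar.charP Fq
    obtain ⟨m, hrcp, hcard'⟩ := FiniteField.card Fq (ringChar Fq)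
    have hpq : p = ringChar Fq := by
      have h1 : p ∣ ringChar Fq ^ (m : ℕ) := by
        rw [← hcard', hcard, hqe]; exact dvd_pow_self p he.ne'
      exact (Nat.prime_dvd_prime_iff_eq hp hrcp).mp (hp.dvd_of_dvd_pow h1)
    exact hpq ▸ ringChar.charP Fq
  haveI hcharK : CharP K p := charP_of_injective_algebraMap (algebraMap Fq K).injective p
  have hq2 : 2 ≤ q := by
    rw [hqe]; calc 2 ≤ p := hp.two_le
    _ ≤ p ^ e := Nat.le_self_pow he.ne' p
  have hq0 : 0 < q := by omega
  have hqp1 : 1 ≤ qp := by rw [hqp]; exact Nat.one_le_pow _ _ hp.pos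
  -- the partial geometric sums p_i
  set PP : ℕ → ℕ := fun i => ∑ j ∈ Finset.range (i + 1), qp ^ j with hPP
  have hPPsucc : ∀ i, PP (i + 1) = PP i + qp ^ (i + 1) := by
    intro i; simp only [hPP]; rw [Finset.sum_range_succ]
  have hPPmono : StrictMono PP := strictMono_nat_of_lt_succ (fun i => by
    rw [hPPsucc i]
    have : 0 < qp ^ (i + 1) := Nat.pow_pos (by omega)
    omega)
  have hPP0 : PP 0 = 1 := by simp [hPP]
  have hPPpos : ∀ i, 1 ≤ PP i := by
    intro i
    induction i with
    | zero => omega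
    | succ i ih => have := hPPsucc i; omega
  have hgeom : ∀ i, PP (i + 1) = qp * PP i + 1 := by
    intro i
    simp only [hPP]
    rw [Finset.sum_range_succ' (fun j => qp ^ j) (i + 1)]
    rw [Finset.mul_sum]
    simp [pow_succ']
  have hDPP : D = t * PP (k - 1) := by
    rw [hD]; simp only [hPP, show k - 1 + 1 = k from by omega]
  have hnPP : n = t * PP k := hn
  have hDn : D < n := by
    rw [hDPP, hnPP]
    have := hPPmono (Nat.sub_lt hk one_pos)
    have hklt : k - 1 < k := Nat.sub_lt hk one_pos
    exact (Nat.mul_lt_mul_left ht).mpr (hPPmono hklt)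
  -- Q1 = q^{st}
  set Q1 : ℕ := (q ^ s) ^ t with hQ1def
  have hQ1p : Q1 = p ^ (e * (s * t)) := by
    rw [hQ1def, ← pow_mul, hqe, ← pow_mul]
  have hQ1pos : 0 < Q1 := by
    rw [hQ1p]; exact Nat.pow_pos hp.pos
  have haddQ1 : ∀ x y : K, (x + y) ^ Q1 = x ^ Q1 + y ^ Q1 := by
    intro x y; rw [hQ1p]; exact add_pow_char_pow x y p (e * (s * t))
  have hqt_pow : ∀ m : ℕ, ∀ x y : K, (x + y) ^ (q ^ m) = x ^ (q ^ m) + y ^ (q ^ m) := by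
    intro m x y
    rw [hqe, ← pow_mul]
    exact add_pow_char_pow x y p (e * m)
  have hsubqt : ∀ m : ℕ, ∀ x y : K, (x - y) ^ (q ^ m) = x ^ (q ^ m) - y ^ (q ^ m) := by
    intro m x y
    rw [hqe, ← pow_mul]
    exact sub_pow_char_pow (p := p) x y (e * m)
  -- cardinality of K and global Frobenius facts
  have hcardK : Fintype.card K = q ^ n := by
    rw [Module.card_eq_pow_finrank (K := Fq) (V := K), hcard, hfin]
  have hxqn : ∀ x : K, x ^ q ^ n = x := fun x => by
    rw [← hcardK]; exact FiniteField.pow_card x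
  have hfixpow : ∀ (a : ℕ) (y : K), y ^ a = y → ∀ m, y ^ a ^ m = y := by
    intro a y hy m
    induction m with
    | zero => simp
    | succ m ih => rw [pow_succ, pow_mul, ih, hy]
  -- the fixed points of x ↦ x^{Q1} satisfy x^{q^t} = x
  have hfixQ1 : ∀ x : K, x ^ Q1 = x → x ^ q ^ t = x := by
    intro x hx
    have hpk2 : 1 < PP k := by
      have h1 : PP 1 ≤ PP k := hPPmono.monotone hk
      have h2 : PP 1 = PP 0 + qp ^ 1 := hPPsucc 0
      have h3 : 1 ≤ qp ^ 1 := by simpa using hqp1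
      have h0 := hPP0
      omega
    have hcop : Nat.Coprime s (PP k) := by
      have hpkn : PP k ∣ n := ⟨t, by rw [hnPP]; ring⟩
      exact Nat.Coprime.coprime_dvd_right hpkn hsn
    obtain ⟨u, -, hu⟩ := Nat.exists_mul_mod_eq_one_of_coprime hcop hpk2
    set w := s * u / PP k with hw
    have hsu : s * u = PP k * w + 1 := by
      rw [hw]
      have := Nat.div_add_mod (s * u) (PP k)
      omega
    have h1 : x ^ Q1 ^ u = x := hfixpow Q1 x hx u
    have h2 : Q1 ^ u = q ^ (n * w) * q ^ t := by
      rw [hQ1def, ← pow_mul, ← pow_mul, ← pow_add]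
      congr 1
      rw [hnPP]
      calc s * (t * u) = t * (s * u) := by ring
      _ = t * (PP k * w + 1) := by rw [hsu]
      _ = t * PP k * w + t := by ring
    rw [h2, pow_mul] at h1
    have h3 : x ^ q ^ (n * w) = x := by
      have : q ^ (n * w) = (q ^ n) ^ w := by rw [← pow_mul]
      rw [this]
      exact hfixpow (q ^ n) x (hxqn x) w
    rw [h3] at h1
    exact h1
  -- upper bound for the fixed points of x ↦ x^{q^t}
  have hqt2 : 2 ≤ q ^ t := by
    calc 2 ≤ q := hq2
    _ = q ^ 1 := (pow_one q).symm
    _ ≤ q ^ t := Nat.pow_le_pow_right hq0 ht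
  have hfixt_ub : Nat.card {x : K | x ^ q ^ t = x} ≤ q ^ t := by
    set PR : Polynomial K := Polynomial.X ^ (q ^ t) - Polynomial.X with hPR
    have hdeg : PR.natDegree = q ^ t := by
      have hlt : (Polynomial.X : Polynomial K).natDegree
          < (Polynomial.X ^ (q ^ t) : Polynomial K).natDegree := by
        rw [Polynomial.natDegree_X_pow, Polynomial.natDegree_X]; omega
      rw [hPR, Polynomial.natDegree_sub_eq_left_of_natDegree_lt hlt, Polynomial.natDegree_X_pow]
    have hPRne : PR ≠ 0 := by
      intro h
      rw [h, Polynomial.natDegree_zero] at hdeg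
      omega
    rw [Nat.card_coe_set_eq]
    have hsub2 : {x : K | x ^ q ^ t = x} ⊆ ↑PR.roots.toFinset := by
      intro x hx
      simp only [Set.mem_setOf_eq] at hx
      simp only [Multiset.mem_toFinset, Finset.mem_coe]
      rw [Polynomial.mem_roots hPRne]
      simp [hPR, Polynomial.IsRoot.def, hx]
    calc {x : K | x ^ q ^ t = x}.ncard ≤ (↑PR.roots.toFinset : Set K).ncard :=
        Set.ncard_le_ncard hsub2 (Set.toFinite _)
    _ = PR.roots.toFinset.card := Set.ncard_coe_finset _
    _ ≤ Multiset.card PR.roots := Multiset.toFinset_card_le _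
    _ ≤ PR.natDegree := Polynomial.card_roots' PR
    _ = q ^ t := hdeg
  have hQfix : Nat.card {x : K | x ^ Q1 = x} ≤ q ^ t := by
    refine le_trans ?_ hfixt_ub
    rw [Nat.card_coe_set_eq, Nat.card_coe_set_eq]
    exact Set.ncard_le_ncard (fun x hx => hfixQ1 x hx) (Set.toFinite _)
  -- exact count of the fixed points of x ↦ x^{q^t}
  have hqtpowpow : ∀ (j : ℕ) (x : K), (x ^ q ^ t) ^ (q ^ t) ^ j = x ^ (q ^ t) ^ (j + 1) := by
    intro j x
    rw [← pow_mul, ← pow_succ']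
  have hfixt_card : Nat.card {x : K | x ^ q ^ t = x} = q ^ t := by
    refine le_antisymm hfixt_ub ?_
    have htel : ∀ x : K, ∑ j ∈ Finset.range (PP k - 1 + 1), (1 : K) * (x ^ q ^ t - x) ^ (q ^ t) ^ j = 0 := by
      intro x
      have hrw : ∀ j : ℕ, (1 : K) * (x ^ q ^ t - x) ^ (q ^ t) ^ j
          = x ^ (q ^ t) ^ (j + 1) - x ^ (q ^ t) ^ j := by
        intro j
        have e1 : ((q : ℕ) ^ t) ^ j = q ^ (t * j) := by rw [← pow_mul]
        have e2 : ((q : ℕ) ^ t) ^ (j + 1) = q ^ (t * (j + 1)) := by rw [← pow_mul]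
        rw [one_mul, e1, e2, hsubqt (t * j), ← pow_mul, ← pow_add,
          show t + t * j = t * (j + 1) from by ring]
      rw [Finset.sum_congr rfl (fun j _ => hrw j)]
      rw [Finset.sum_range_sub (fun j => x ^ (q ^ t) ^ j) (PP k - 1 + 1)]
      have hppk : PP k - 1 + 1 = PP k := by have := hPPpos k; omega
      rw [hppk]
      have h1 : x ^ (q ^ t) ^ PP k = x := by
        rw [show ((q : ℕ) ^ t) ^ PP k = q ^ n from by rw [← pow_mul, ← hnPP]]
        exact hxqn x
      simp [h1]
    have hTr_ub : Nat.card {x : K | ∑ j ∈ Finset.range (PP k - 1 + 1), (1 : K) * x ^ (q ^ t) ^ j = 0}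
        ≤ (q ^ t) ^ (PP k - 1) :=
      UB (q ^ t) (q ^ t) (by omega) (hqt_pow t) hfixt_ub (PP k - 1) (fun _ => (1 : K)) one_ne_zero
    have hcount := countCH Set.univ
      {x : K | ∑ j ∈ Finset.range (PP k - 1 + 1), (1 : K) * x ^ (q ^ t) ^ j = 0}
      {x : K | x ^ q ^ t = x} (fun x => x ^ q ^ t - x)
      (fun x _ => htel x)
      (by
        intro x _ y _ hxy
        have hxy' : x ^ q ^ t - x = y ^ q ^ t - y := hxy
        simp only [Set.mem_setOf_eq]
        rw [hsubqt t]
        linear_combination hxy')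
    have huniv : Nat.card (Set.univ : Set K) = q ^ n := by
      rw [Nat.card_coe_set_eq, Set.ncard_univ, Nat.card_eq_fintype_card, hcardK]
    rw [huniv] at hcount
    have hqn_split : q ^ n = (q ^ t) ^ (PP k - 1) * q ^ t := by
      rw [← pow_mul, ← pow_add]
      congr 1
      obtain ⟨m', hm'⟩ : ∃ m', PP k = m' + 1 := ⟨PP k - 1, by have := hPPpos k; omega⟩
      rw [hnPP, hm', Nat.add_sub_cancel, Nat.mul_succ]
    have hchain : (q ^ t) ^ (PP k - 1) * q ^ t
        ≤ (q ^ t) ^ (PP k - 1) * Nat.card {x : K | x ^ q ^ t = x} := by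
      calc (q ^ t) ^ (PP k - 1) * q ^ t = q ^ n := hqn_split.symm
      _ ≤ _ := le_trans hcount (Nat.mul_le_mul_right _ hTr_ub)
    exact Nat.le_of_mul_le_mul_left hchain (Nat.pow_pos (by omega))
  have huniv2 : Nat.card (Set.univ : Set K) = q ^ n := by
    rw [Nat.card_coe_set_eq, Set.ncard_univ, Nat.card_eq_fintype_card, hcardK]
  -- the Fq-linear Frobenius power τ : x ↦ x^{Q1}
  have hsmul : ∀ (a : Fq) (x : K), (a • x) ^ Q1 = a • x ^ Q1 := by
    intro a x
    rw [Algebra.smul_def, Algebra.smul_def, mul_pow, ← map_pow]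
    congr 2
    rw [hQ1def, ← pow_mul, ← hcard]
    exact FiniteField.pow_card_pow _ _
  let τ : Module.End Fq K :=
    { toFun := fun x => x ^ Q1
      map_add' := haddQ1
      map_smul' := by intro a x; simp only [RingHom.id_apply]; exact hsmul a x }
  have hτapp : ∀ x : K, τ x = x ^ Q1 := fun _ => rfl
  have hτpow : ∀ (i : ℕ) (x : K), (τ ^ i) x = x ^ Q1 ^ i := by
    intro i
    induction i with
    | zero => intro x; simp
    | succ i ih =>
      intro x
      rw [pow_succ, Module.End.mul_apply, ih (τ x), hτapp, ← pow_mul, ← pow_succ']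
  -- the polynomial FF with f = FF(τ)
  set FF : Polynomial Fq := 1 + ∑ i ∈ Finset.range k, Polynomial.X ^ PP i with hFFdef
  have hFFcoeff : ∀ m : ℕ, FF.coeff m
      = (if m = 0 then 1 else 0) + ∑ i ∈ Finset.range k, (if m = PP i then (1:Fq) else 0) := by
    intro m
    rw [hFFdef, Polynomial.coeff_add, Polynomial.coeff_one, Polynomial.finset_sum_coeff]
    congr 1
    apply Finset.sum_congr rfl
    intro i _
    rw [Polynomial.coeff_X_pow]
  have hFFtop : FF.coeff (PP (k - 1)) = 1 := by
    rw [hFFcoeff, if_neg (by have := hPPpos (k - 1); omega)]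
    rw [Finset.sum_eq_single (k - 1)]
    · rw [if_pos rfl]; ring
    · intro i hi hne
      rw [if_neg]
      intro hcontra
      exact hne (hPPmono.injective hcontra.symm)
    · intro habs
      exact absurd (Finset.mem_range.mpr (by omega)) habs
  have hFF0 : FF.coeff 0 = 1 := by
    rw [hFFcoeff, if_pos rfl]
    rw [Finset.sum_eq_zero, add_zero]
    intro i _
    rw [if_neg (by have := hPPpos i; omega)]
  have hFF1 : FF.coeff 1 = 1 := by
    rw [hFFcoeff, if_neg one_ne_zero]
    rw [Finset.sum_eq_single 0]
    · rw [if_pos hPP0.symm]; ring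
    · intro i hi hne
      rw [if_neg]
      intro hcontra
      apply hne
      have : PP i = PP 0 := by rw [hPP0, ← hcontra]
      exact hPPmono.injective this
    · intro habs
      exact absurd (Finset.mem_range.mpr (by omega)) habs
  have hFFdeg_le : FF.natDegree ≤ PP (k - 1) := by
    rw [hFFdef]
    apply le_trans (Polynomial.natDegree_add_le _ _)
    rw [max_le_iff]
    constructor
    · simp
    · apply Polynomial.natDegree_sum_le_of_forall_le
      intro i hi
      rw [Polynomial.natDegree_X_pow]
      exact hPPmono.monotone (by simp only [Finset.mem_range] at hi; omega)
  have hFFmonic : FF.Monic :=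
    Polynomial.monic_of_natDegree_le_of_coeff_eq_one _ hFFdeg_le hFFtop
  have hFFdeg_eq : FF.natDegree = PP (k - 1) :=
    le_antisymm hFFdeg_le (Polynomial.le_natDegree_of_ne_zero (by rw [hFFtop]; exact one_ne_zero))
  -- the polynomial HH with FF * HH = X^{PP k} - 1
  set HH : Polynomial Fq := Polynomial.X * FF ^ (qp - 1) - 1 with hHHdef
  have harith : 1 + (qp - 1) * PP (k - 1) = qp ^ k := by
    have h1 : PP k = qp * PP (k - 1) + 1 := by
      have := hgeom (k - 1)
      rw [show k - 1 + 1 = k from by omega] at this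
      exact this
    have h2 : PP k = PP (k - 1) + qp ^ k := by
      have := hPPsucc (k - 1)
      rw [show k - 1 + 1 = k from by omega] at this
      exact this
    have h3 : (qp - 1) * PP (k - 1) = qp * PP (k - 1) - PP (k - 1) := by
      rw [Nat.sub_mul, one_mul]
    have h4 : 1 ≤ qp ^ k := Nat.one_le_pow _ _ (by omega)
    omega
  have hMX : (Polynomial.X * FF ^ (qp - 1) : Polynomial Fq).Monic :=
    Polynomial.monic_X.mul (hFFmonic.pow _)
  have hXFdeg : (Polynomial.X * FF ^ (qp - 1) : Polynomial Fq).natDegree = qp ^ k := by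
    rw [Polynomial.natDegree_mul Polynomial.X_ne_zero (hFFmonic.pow _).ne_zero]
    rw [Polynomial.natDegree_X, Polynomial.natDegree_pow, hFFdeg_eq]
    exact harith
  have hHHtop : HH.coeff (qp ^ k) = 1 := by
    rw [hHHdef, Polynomial.coeff_sub, Polynomial.coeff_one,
      if_neg (by have : 0 < qp ^ k := Nat.pow_pos (by omega); omega), sub_zero, ← hXFdeg]
    exact hMX.coeff_natDegree
  have hHHdeg : HH.natDegree ≤ qp ^ k := by
    rw [hHHdef]
    apply le_trans (Polynomial.natDegree_sub_le _ _)
    rw [max_le_iff, hXFdeg]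
    simp
  -- freshman's dream and the product identity
  have hFFmap : FF.map (frobenius Fq p) = FF := by
    rw [hFFdef]
    rw [Polynomial.map_add, Polynomial.map_one, Polynomial.map_sum]
    congr 1
    apply Finset.sum_congr rfl
    intro i _
    rw [Polynomial.map_pow, Polynomial.map_X]
  have hfrob : ∀ m : ℕ, FF ^ p ^ m = Polynomial.expand Fq (p ^ m) FF := by
    intro m
    induction m with
    | zero => simp
    | succ m ih =>
      have h1 : FF ^ p ^ (m + 1) = (FF ^ p ^ m) ^ p := by rw [← pow_mul, pow_succ]
      rw [h1, ih]
      have h2 : (Polynomial.expand Fq (p ^ m) FF) ^ p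
          = Polynomial.map (frobenius Fq p) (Polynomial.expand Fq p (Polynomial.expand Fq (p ^ m) FF)) :=
        (Polynomial.map_frobenius_expand p _).symm
      rw [h2, Polynomial.map_expand, Polynomial.map_expand, hFFmap, Polynomial.expand_expand]
      rw [← pow_succ']
  have hkey : Polynomial.X * Polynomial.expand Fq qp FF = FF - 1 + Polynomial.X ^ PP k := by
    have h1 : Polynomial.expand Fq qp FF = 1 + ∑ i ∈ Finset.range k, Polynomial.X ^ (qp * PP i) := by
      rw [hFFdef, map_add, map_one, map_sum]
      congr 1
      apply Finset.sum_congr rfl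
      intro i _
      rw [map_pow, Polynomial.expand_X, ← pow_mul, mul_comm]
    rw [h1, mul_add, mul_one, Finset.mul_sum]
    have h2 : ∀ i, (Polynomial.X : Polynomial Fq) * Polynomial.X ^ (qp * PP i)
        = Polynomial.X ^ PP (i + 1) := by
      intro i
      rw [hgeom i, pow_succ, mul_comm]
    rw [Finset.sum_congr rfl (fun i _ => h2 i)]
    rw [hFFdef]
    have h3 : (1 : Polynomial Fq) + (∑ i ∈ Finset.range k, Polynomial.X ^ PP i) - 1
        + Polynomial.X ^ PP k
        = (∑ i ∈ Finset.range k, Polynomial.X ^ PP i) + Polynomial.X ^ PP k := by ring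
    rw [h3]
    have h4 : ∑ i ∈ Finset.range (k + 1), (Polynomial.X : Polynomial Fq) ^ PP i
        = (∑ i ∈ Finset.range k, Polynomial.X ^ PP (i + 1)) + Polynomial.X := by
      rw [Finset.sum_range_succ' (fun i => (Polynomial.X : Polynomial Fq) ^ PP i) k, hPP0, pow_one]
    have h5 : ∑ i ∈ Finset.range (k + 1), (Polynomial.X : Polynomial Fq) ^ PP i
        = (∑ i ∈ Finset.range k, Polynomial.X ^ PP i) + Polynomial.X ^ PP k :=
      Finset.sum_range_succ _ k
    rw [← h5, h4]
    ring
  have hFHprod : FF * HH = Polynomial.X ^ PP k - 1 := by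
    rw [hHHdef]
    have h0 : FF * (Polynomial.X * FF ^ (qp - 1) - 1) = Polynomial.X * FF ^ qp - FF := by
      have h00 : FF * (Polynomial.X * FF ^ (qp - 1)) = Polynomial.X * FF ^ (qp - 1 + 1) := by ring
      rw [mul_sub, h00, show qp - 1 + 1 = qp from by omega, mul_one]
    rw [h0, hqp, hfrob r, ← hqp, hkey]
    ring
  -- expansion of aeval in terms of coefficients
  have hexp : ∀ (P : Polynomial Fq) (N : ℕ), P.natDegree < N → ∀ x : K,
      (Polynomial.aeval τ P) x
        = ∑ i ∈ Finset.range N, algebraMap Fq K (P.coeff i) * x ^ Q1 ^ i := by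
    intro P N hN x
    conv_lhs => rw [P.as_sum_range' N hN]
    rw [map_sum, LinearMap.sum_apply]
    apply Finset.sum_congr rfl
    intro i _
    rw [Polynomial.aeval_monomial, Module.End.mul_apply, Module.algebraMap_end_apply,
      hτpow, Algebra.smul_def]
  -- f is FF(τ)
  have hfτ : ∀ x : K, f x = (Polynomial.aeval τ FF) x := by
    intro x
    rw [hf]
    simp only
    rw [hFFdef, map_add, map_one, map_sum, LinearMap.add_apply, Module.End.one_apply,
      LinearMap.sum_apply]
    congr 1
    apply Finset.sum_congr rfl
    intro i _
    rw [map_pow, Polynomial.aeval_X, hτpow]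
    have hQPP : Q1 ^ PP i = (q ^ s) ^ (t * ∑ j ∈ Finset.range (i + 1), qp ^ j) := by
      rw [hQ1def, ← pow_mul]
    rw [hQPP]
  have hQ1PPk : ∀ x : K, x ^ Q1 ^ PP k = x := by
    intro x
    have hxx : Q1 ^ PP k = (q ^ n) ^ s := by
      rw [hQ1def, ← pow_mul, ← pow_mul, ← pow_mul, hnPP]
      congr 1
      ring
    rw [hxx]
    exact hfixpow (q ^ n) x (hxqn x) s
  -- the kernel of f has exactly q^D elements
  have hkerf_ub : Nat.card {x : K | f x = 0} ≤ q ^ D := by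
    have hset : {x : K | f x = 0}
        = {x : K | ∑ i ∈ Finset.range (PP (k - 1) + 1),
            algebraMap Fq K (FF.coeff i) * x ^ Q1 ^ i = 0} := by
      ext x
      simp only [Set.mem_setOf_eq]
      rw [hfτ x, hexp FF (PP (k - 1) + 1) (by omega) x]
    rw [hset]
    calc Nat.card {x : K | ∑ i ∈ Finset.range (PP (k - 1) + 1),
            algebraMap Fq K (FF.coeff i) * x ^ Q1 ^ i = 0}
        ≤ (q ^ t) ^ PP (k - 1) :=
          UB Q1 (q ^ t) hQ1pos haddQ1 hQfix (PP (k - 1))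
            (fun i => algebraMap Fq K (FF.coeff i))
            (by show algebraMap Fq K (FF.coeff (PP (k - 1))) ≠ 0
                rw [hFFtop, map_one]; exact one_ne_zero)
      _ = q ^ D := by rw [← pow_mul, hDPP]
  set hmap : K → K := fun x => (Polynomial.aeval τ HH) x with hhmap
  have hfh : ∀ x : K, f (hmap x) = 0 := by
    intro x
    rw [hhmap]
    simp only
    rw [hfτ, ← Module.End.mul_apply, ← map_mul, hFHprod, map_sub, map_pow, Polynomial.aeval_X,
      map_one, LinearMap.sub_apply, Module.End.one_apply, hτpow, hQ1PPk, sub_self]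
  have hkerh_ub : Nat.card {x : K | hmap x = 0} ≤ q ^ (t * qp ^ k) := by
    have hset : {x : K | hmap x = 0}
        = {x : K | ∑ i ∈ Finset.range (qp ^ k + 1),
            algebraMap Fq K (HH.coeff i) * x ^ Q1 ^ i = 0} := by
      ext x
      simp only [hhmap, Set.mem_setOf_eq]
      rw [hexp HH (qp ^ k + 1) (by omega) x]
    rw [hset]
    calc Nat.card {x : K | ∑ i ∈ Finset.range (qp ^ k + 1),
            algebraMap Fq K (HH.coeff i) * x ^ Q1 ^ i = 0}
        ≤ (q ^ t) ^ qp ^ k :=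
          UB Q1 (q ^ t) hQ1pos haddQ1 hQfix (qp ^ k)
            (fun i => algebraMap Fq K (HH.coeff i))
            (by show algebraMap Fq K (HH.coeff (qp ^ k)) ≠ 0
                rw [hHHtop, map_one]; exact one_ne_zero)
      _ = q ^ (t * qp ^ k) := by rw [← pow_mul]
  have hsplitn : q ^ n = q ^ D * q ^ (t * qp ^ k) := by
    rw [← pow_add]
    congr 1
    have h2 : PP k = PP (k - 1) + qp ^ k := by
      have := hPPsucc (k - 1)
      rw [show k - 1 + 1 = k from by omega] at this
      exact this
    rw [hDPP, hnPP, h2]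
    ring
  have hkerf_lb : q ^ D ≤ Nat.card {x : K | f x = 0} := by
    have hcnt := countCH Set.univ {x : K | f x = 0} {x : K | hmap x = 0} hmap
      (fun x _ => hfh x)
      (by
        intro x _ y _ hxy
        simp only [Set.mem_setOf_eq, hhmap]
        have hxy' : (Polynomial.aeval τ HH) x = (Polynomial.aeval τ HH) y := hxy
        rw [map_sub, hxy', sub_self])
    rw [huniv2] at hcnt
    have hchain : q ^ D * q ^ (t * qp ^ k)
        ≤ Nat.card {x : K | f x = 0} * q ^ (t * qp ^ k) := by
      calc q ^ D * q ^ (t * qp ^ k) = q ^ n := hsplitn.symm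
      _ ≤ Nat.card {x : K | f x = 0} * Nat.card {x : K | hmap x = 0} := hcnt
      _ ≤ Nat.card {x : K | f x = 0} * q ^ (t * qp ^ k) :=
          Nat.mul_le_mul_left _ hkerh_ub
    exact Nat.le_of_mul_le_mul_right hchain (Nat.pow_pos (by omega))
  have hkerf : Nat.card {x : K | f x = 0} = q ^ D := le_antisymm hkerf_ub hkerf_lb
  -- === Part A ===
  have partA : ∀ β : K, β ≠ 0 →
      kdim Fq (fun x : K => (β ^ ((q ^ s) ^ D))⁻¹ * f (β * x)) = D ∧
      Nat.card ↥{x : K | (β ^ ((q ^ s) ^ D))⁻¹ * f (β * x) = 0} = q ^ D := by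
    intro β hβ
    have hβE : (β ^ ((q ^ s) ^ D)) ≠ 0 := pow_ne_zero _ hβ
    have hZ : {x : K | (β ^ ((q ^ s) ^ D))⁻¹ * f (β * x) = 0} = {x : K | f (β * x) = 0} := by
      ext x
      simp only [Set.mem_setOf_eq]
      rw [mul_eq_zero]
      constructor
      · rintro (h | h)
        · exact absurd h (inv_ne_zero hβE)
        · exact h
      · intro h; right; exact h
    have hcardZ : Nat.card {x : K | f (β * x) = 0} = q ^ D := by
      rw [← hkerf]
      apply Nat.card_congr
      exact Equiv.subtypeEquiv (Equiv.mulLeft₀ β hβ) (fun x => Iff.rfl)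
    set M : Submodule Fq K :=
      LinearMap.ker ((Polynomial.aeval τ FF) ∘ₗ (LinearMap.mulLeft Fq β)) with hM
    have hMset : {x : K | f (β * x) = 0} = (M : Set K) := by
      ext x
      simp only [Set.mem_setOf_eq, hM, LinearMap.mem_ker, SetLike.mem_coe,
        LinearMap.comp_apply, LinearMap.mulLeft_apply]
      rw [hfτ]
    have hMcard : Nat.card ↥M = q ^ D := by
      rw [← hcardZ]
      exact (Nat.card_congr (Equiv.setCongr hMset)).symm
    constructor
    · show Module.finrank Fq
        ↥(Submodule.span Fq {x : K | (β ^ ((q ^ s) ^ D))⁻¹ * f (β * x) = 0}) = D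
      rw [hZ, hMset, Submodule.span_eq]
      have h2 : Fintype.card ↥M = q ^ Module.finrank Fq ↥M := by
        rw [← hcard]
        exact Module.card_eq_pow_finrank (K := Fq) (V := ↥M)
      have h3 : Nat.card ↥M = Fintype.card ↥M := Nat.card_eq_fintype_card
      have h4 : q ^ Module.finrank Fq ↥M = q ^ D := by rw [← h2, ← h3, hMcard]
      exact Nat.pow_right_injective hq2 h4
    · rw [hZ]
      exact hcardZ
  -- === Part B ===
  have partB : ∀ α β : K, α ≠ 0 → β ≠ 0 →
      ((fun x : K => (α ^ ((q ^ s) ^ D))⁻¹ * f (α * x))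
          = (fun x : K => (β ^ ((q ^ s) ^ D))⁻¹ * f (β * x))
        ↔ (α * β⁻¹) ^ q ^ t = α * β⁻¹) := by
    intro α β hα hβ
    have hEQ : (q ^ s) ^ D = Q1 ^ PP (k - 1) := by rw [hDPP, pow_mul, hQ1def]
    set γ : K := α * β⁻¹ with hγ
    have hγne : γ ≠ 0 := mul_ne_zero hα (inv_ne_zero hβ)
    have hαγ : α = γ * β := by rw [hγ]; field_simp
    have hβE : (β ^ ((q ^ s) ^ D)) ≠ 0 := pow_ne_zero _ hβ
    have hαE : (α ^ ((q ^ s) ^ D)) ≠ 0 := pow_ne_zero _ hα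
    constructor
    · intro heq
      have hpt : ∀ y : K, f (γ * y) = γ ^ ((q ^ s) ^ D) * f y := by
        intro y
        have hthis := congrFun heq (β⁻¹ * y)
        have hby : β * (β⁻¹ * y) = y := by field_simp
        have hay : α * (β⁻¹ * y) = γ * y := by rw [hαγ]; field_simp
        rw [hby, hay] at hthis
        have h2 := congrArg (fun z => α ^ ((q ^ s) ^ D) * z) hthis
        rw [← mul_assoc, mul_inv_cancel₀ hαE, one_mul] at h2
        rw [h2, hγ, mul_pow, inv_pow]
        ring
      set cE : K := γ ^ ((q ^ s) ^ D) with hcE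
      set A : ℕ → K := fun j => algebraMap Fq K (FF.coeff j) * (γ ^ Q1 ^ j - cE) with hA
      have hAzero : ∀ y : K, ∑ j ∈ Finset.range (PP (k - 1) + 1), A j * y ^ Q1 ^ j = 0 := by
        intro y
        have h1 : f (γ * y) = ∑ j ∈ Finset.range (PP (k - 1) + 1),
            algebraMap Fq K (FF.coeff j) * γ ^ Q1 ^ j * y ^ Q1 ^ j := by
          rw [hfτ, hexp FF (PP (k - 1) + 1) (by omega)]
          apply Finset.sum_congr rfl
          intro j _
          rw [mul_pow]
          ring
        have h2 : cE * f y = ∑ j ∈ Finset.range (PP (k - 1) + 1),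
            algebraMap Fq K (FF.coeff j) * cE * y ^ Q1 ^ j := by
          rw [hfτ, hexp FF (PP (k - 1) + 1) (by omega), Finset.mul_sum]
          apply Finset.sum_congr rfl
          intro j _
          ring
        have h3 := hpt y
        have h4 : ∑ j ∈ Finset.range (PP (k - 1) + 1), A j * y ^ Q1 ^ j
            = f (γ * y) - cE * f y := by
          rw [h1, h2, ← Finset.sum_sub_distrib]
          apply Finset.sum_congr rfl
          intro j _
          simp only [hA]
          ring
        rw [h4, h3, hcE, sub_self]
      have hAall : ∀ j, j < PP (k - 1) + 1 → A j = 0 := by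
        by_contra hcon
        push_neg at hcon
        obtain ⟨j0, hj0lt, hj0ne⟩ := hcon
        set T := (Finset.range (PP (k - 1) + 1)).filter (fun j => A j ≠ 0) with hT
        have hTne : T.Nonempty := ⟨j0, by simp only [hT, Finset.mem_filter, Finset.mem_range]
                                          exact ⟨hj0lt, hj0ne⟩⟩
        set d := T.max' hTne with hd
        have hdmem : d ∈ T := T.max'_mem hTne
        have hdlt : d < PP (k - 1) + 1 := by
          have := (Finset.mem_filter.mp hdmem).1
          exact Finset.mem_range.mp this
        have hdne : A d ≠ 0 := (Finset.mem_filter.mp hdmem).2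
        have hzero_d : ∀ y : K, ∑ j ∈ Finset.range (d + 1), A j * y ^ Q1 ^ j = 0 := by
          intro y
          have hsubset : Finset.range (d + 1) ⊆ Finset.range (PP (k - 1) + 1) :=
            Finset.range_subset_range.mpr (by omega)
          have hvan : ∀ j ∈ Finset.range (PP (k - 1) + 1), j ∉ Finset.range (d + 1) →
              A j * y ^ Q1 ^ j = 0 := by
            intro j hj hnj
            have hj1 := Finset.mem_range.mp hj
            have hj2 : d < j := by
              by_contra hcon2
              exact hnj (Finset.mem_range.mpr (by omega))
            have : A j = 0 := by
              by_contra h3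
              have hjT : j ∈ T := Finset.mem_filter.mpr ⟨hj, h3⟩
              have := T.le_max' j hjT
              omega
            rw [this, zero_mul]
          rw [Finset.sum_subset hsubset hvan]
          exact hAzero y
        have hub := UB Q1 (q ^ t) hQ1pos haddQ1 hQfix d A hdne
        have hall : {x : K | ∑ j ∈ Finset.range (d + 1), A j * x ^ Q1 ^ j = 0}
            = Set.univ := by
          ext x
          simp only [Set.mem_setOf_eq, Set.mem_univ, iff_true]
          exact hzero_d x
        rw [hall, huniv2] at hub
        have hle : (q ^ t) ^ d ≤ q ^ D := by
          rw [← pow_mul, hDPP]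
          exact Nat.pow_le_pow_right hq0 (Nat.mul_le_mul_left t (by omega))
        have hlt : q ^ D < q ^ n := Nat.pow_lt_pow_right (by omega) hDn
        omega
      have h0 := hAall 0 (by omega)
      have h1 := hAall 1 (by have := hPPpos (k - 1); omega)
      simp only [hA] at h0 h1
      rw [hFF0, map_one, one_mul] at h0
      rw [hFF1, map_one, one_mul] at h1
      have h0' : γ ^ Q1 ^ 0 = cE := sub_eq_zero.mp h0
      have h1' : γ ^ Q1 = cE := by
        have := sub_eq_zero.mp h1
        rw [pow_one] at this
        exact this
      have hγQ1 : γ ^ Q1 = γ := by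
        rw [h1', ← h0']
        simp
      exact hfixQ1 γ hγQ1
    · intro hfix
      have hγQ1pow : ∀ m : ℕ, γ ^ Q1 ^ m = γ := by
        intro m
        have hrw : Q1 ^ m = (q ^ t) ^ (s * m) := by
          rw [hQ1def, ← pow_mul, ← pow_mul, ← pow_mul]
          congr 1
          ring
        rw [hrw]
        exact hfixpow _ _ hfix (s * m)
      have hfγ : ∀ y : K, f (γ * y) = γ * f y := by
        intro y
        rw [hfτ, hfτ, hexp FF (PP (k - 1) + 1) (by omega), hexp FF (PP (k - 1) + 1) (by omega),
          Finset.mul_sum]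
        apply Finset.sum_congr rfl
        intro j _
        rw [mul_pow, hγQ1pow]
        ring
      funext x
      have hαx : α * x = γ * (β * x) := by rw [hαγ]; ring
      have hαEγ : α ^ ((q ^ s) ^ D) = γ * β ^ ((q ^ s) ^ D) := by
        rw [hαγ, mul_pow]
        congr 1
        rw [hEQ]
        exact hγQ1pow _
      rw [hαx, hfγ, hαEγ, mul_inv]
      field_simp
  -- === Part C ===
  have partC : Nat.card ↥{g : K → K | ∃ β : K, β ≠ 0 ∧
      g = fun x : K => (β ^ ((q ^ s) ^ D))⁻¹ * f (β * x)} = (q ^ n - 1) / (q ^ t - 1) := by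
    set G : K → (K → K) := fun β => fun x => (β ^ ((q ^ s) ^ D))⁻¹ * f (β * x) with hG
    set S : Finset K := Finset.univ.filter (fun β : K => β ≠ 0) with hS
    have hSQ : {g : K → K | ∃ β : K, β ≠ 0 ∧
        g = fun x : K => (β ^ ((q ^ s) ^ D))⁻¹ * f (β * x)} = ↑(S.image G) := by
      ext g
      simp only [Set.mem_setOf_eq, Finset.coe_image, Set.mem_image, Finset.mem_coe, hS, hG,
        Finset.mem_filter, Finset.mem_univ, true_and]
      constructor
      · rintro ⟨β, hβ, hg⟩
        exact ⟨β, hβ, hg.symm⟩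
      · rintro ⟨β, hβ, hg⟩
        exact ⟨β, hβ, hg.symm⟩
    have hWcard : (Finset.univ.filter (fun x : K => x ≠ 0 ∧ x ^ q ^ t = x)).card = q ^ t - 1 := by
      have hfull : (Finset.univ.filter (fun x : K => x ^ q ^ t = x)).card = q ^ t := by
        have hseteq : Finset.univ.filter (fun x : K => x ^ q ^ t = x)
            = {x : K | x ^ q ^ t = x}.toFinset := by
          ext x
          simp [Set.mem_toFinset]
        rw [hseteq, ← Set.ncard_eq_toFinset_card', ← Nat.card_coe_set_eq, hfixt_card]
      have hsplit : Finset.univ.filter (fun x : K => x ^ q ^ t = x)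
          = insert 0 (Finset.univ.filter (fun x : K => x ≠ 0 ∧ x ^ q ^ t = x)) := by
        ext x
        simp only [Finset.mem_insert, Finset.mem_filter, Finset.mem_univ, true_and]
        constructor
        · intro hx
          by_cases h : x = 0
          · left; exact h
          · right; exact ⟨h, hx⟩
        · rintro (h | ⟨_, hx⟩)
          · rw [h]
            exact zero_pow (by omega)
          · exact hx
      rw [hsplit, Finset.card_insert_of_notMem (by simp)] at hfull
      omega
    have hfiber : ∀ g ∈ S.image G, (S.filter (fun β => G β = g)).card = q ^ t - 1 := by
      intro g hg
      obtain ⟨α, hαS, hGα⟩ := Finset.mem_image.mp hg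
      have hαne : α ≠ 0 := by
        rw [hS] at hαS
        exact (Finset.mem_filter.mp hαS).2
      rw [← hWcard]
      apply Finset.card_bij (fun β _ => β * α⁻¹)
      · intro β hβ
        obtain ⟨hβS, hGβ⟩ := Finset.mem_filter.mp hβ
        have hβne : β ≠ 0 := by
          rw [hS] at hβS
          exact (Finset.mem_filter.mp hβS).2
        simp only [Finset.mem_filter, Finset.mem_univ, true_and]
        constructor
        · exact mul_ne_zero hβne (inv_ne_zero hαne)
        · have heqG : G β = G α := by rw [hGβ, hGα]
          exact (partB β α hβne hαne).mp heqG
      · intro β1 hβ1 β2 hβ2 heq12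
        have hα1 : α⁻¹ ≠ 0 := inv_ne_zero hαne
        field_simp at heq12
        exact heq12
      · intro w hw
        obtain ⟨hwne, hwfix⟩ := by
          have := Finset.mem_filter.mp hw
          exact this.2
        refine ⟨w * α, ?_, ?_⟩
        · apply Finset.mem_filter.mpr
          constructor
          · apply Finset.mem_filter.mpr
            exact ⟨Finset.mem_univ _, mul_ne_zero hwne hαne⟩
          · rw [← hGα]
            apply (partB (w * α) α (mul_ne_zero hwne hαne) hαne).mpr
            have : w * α * α⁻¹ = w := by field_simp
            rw [this]
            exact hwfix
        · field_simp
    have hcardS : S.card = q ^ n - 1 := by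
      rw [hS, Finset.filter_ne', Finset.card_erase_of_mem (Finset.mem_univ 0),
        Finset.card_univ, hcardK]
    have hsum : S.card = ∑ g ∈ S.image G, (S.filter (fun β => G β = g)).card :=
      Finset.card_eq_sum_card_fiberwise (fun β hβ => Finset.mem_image_of_mem G hβ)
    rw [Finset.sum_congr rfl hfiber, Finset.sum_const, smul_eq_mul] at hsum
    have hkey : Nat.card ↥{g : K → K | ∃ β : K, β ≠ 0 ∧
        g = fun x : K => (β ^ ((q ^ s) ^ D))⁻¹ * f (β * x)} = (S.image G).card := by
      rw [hSQ, Nat.card_coe_set_eq, Set.ncard_coe_finset]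
    rw [hkey]
    symm
    apply Nat.div_eq_of_eq_mul_left
    · omega
    · rw [← hcardS, hsum]
      try ring
      try rw [Nat.mul_comm]
  exact ⟨partA, partB, partC⟩
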